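/- Let λ, Γ, δ ∈ (0,1), χ = λΓ + (1-λ)(1-δ), ψ = λ(1-χ)/((1-λ)χ), with χ < 1. Suppose π₀ > 0 and nonnegative numbers π₂, ε₂ satisfy the two equations π₂·(1-λ)·Γ + ε₂·(1-λ)·(1-δ) = (λ²(1-Γ)/((1-λ)χ))·π₀ and ε₂·(1 - δ(1-λ)) − π₂·(1-λ)·(1-Γ) = (λ²(1-Γ)/((1-λ)χ))·π₀. Then ε₂ = ((1-λ)/λ)·π₂, and moreover ε₂ = ψ²·((1-λ)(1-Γ)/(1-χ)²)·π₀ and π₂ = ψ²·(λ(1-Γ)/(1-χ)²)·π₀. -/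

import Mathlib

/-- Solving the two equations for the states with two packets yields
`ε₂ = ((1-λ)/λ)·π₂` and the closed forms for `ε₂` and `π₂`. -/
theorem balance_equations_give_eps2_pi2
    (lam Γ δ χ ψ : ℝ)
    (hlam : 0 < lam) (hlam1 : lam < 1)
    (hΓ : 0 < Γ) (hΓ1 : Γ < 1)
    (hδ : 0 < δ) (hδ1 : δ < 1)
    (hχ : χ = lam * Γ + (1 - lam) * (1 - δ))
    (hψ : ψ = lam * (1 - χ) / ((1 - lam) * χ))
    (hχ1 : χ < 1)
    (pi0 pi2 eps2 : ℝ)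
    (hpi0 : 0 < pi0) (hpi2 : 0 ≤ pi2) (heps2 : 0 ≤ eps2)
    (heq1 : pi2 * (1 - lam) * Γ + eps2 * (1 - lam) * (1 - δ)
      = (lam ^ 2 * (1 - Γ) / ((1 - lam) * χ)) * pi0)
    (heq2 : eps2 * (1 - δ * (1 - lam)) - pi2 * (1 - lam) * (1 - Γ)
      = (lam ^ 2 * (1 - Γ) / ((1 - lam) * χ)) * pi0) :
    eps2 = ((1 - lam) / lam) * pi2 ∧
      eps2 = ψ ^ 2 * ((1 - lam) * (1 - Γ) / (1 - χ) ^ 2) * pi0 ∧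
      pi2 = ψ ^ 2 * (lam * (1 - Γ) / (1 - χ) ^ 2) * pi0 := by
  have hχ0 : 0 < χ := by nlinarith
  have hlamne : lam ≠ 0 := ne_of_gt hlam
  have h1lam : (1 : ℝ) - lam ≠ 0 := by linarith
  have hχne : χ ≠ 0 := ne_of_gt hχ0
  have h1χ : (1 : ℝ) - χ ≠ 0 := by linarith
  have hrel : eps2 * lam = pi2 * (1 - lam) := by linear_combination heq2 - heq1
  have heq1' : (pi2 * (1 - lam) * Γ + eps2 * (1 - lam) * (1 - δ)) * ((1 - lam) * χ)
      = lam ^ 2 * (1 - Γ) * pi0 := by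
    field_simp at heq1; linarith [heq1]
  have h2 : pi2 * ((1 - lam) ^ 2 * χ ^ 2) = lam ^ 3 * (1 - Γ) * pi0 := by
    linear_combination lam * heq1' - (1 - lam) ^ 2 * χ * (1 - δ) * hrel
      + pi2 * (1 - lam) ^ 2 * χ * hχ
  have hpi2v : pi2 = ψ ^ 2 * (lam * (1 - Γ) / (1 - χ) ^ 2) * pi0 := by
    subst hψ
    field_simp
    linear_combination h2
  have heps2v : eps2 = ((1 - lam) / lam) * pi2 := by
    field_simp
    linarith [hrel]
  refine ⟨heps2v, ?_, hpi2v⟩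
  rw [heps2v, hpi2v]
  field_simp
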